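/- arXiv:math/0305028 — 4 statements merged into one kernel-verified Lean document; each statement's English description precedes it below -/
import Mathlib

section
/- Let G be a finite group acting on a finite set X, and let H be a subgroup of G. Then the number of H-orbits of X equals (G : H) times the number of G-orbits of X if and only if for every x ∈ X the stabilizer of x in H equals the stabilizer of x in G, i.e. H_x = G_x for all x ∈ X (equivalently, G_x ⊆ H for all x ∈ X). -/
open MulAction

/-- If a finite group `G` acts on a finite set `X` and `H ≤ G`, then the number of
`H`-orbits of `X` equals `(G : H)` times the number of `G`-orbits of `X` if and only if
for every `x ∈ X` the stabilizer of `x` in `H` equals the stabilizer of `x` in `G`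
(the former viewed as a subgroup of `G` via the inclusion `H ↪ G`). -/
theorem card_H_orbits_eq_index_mul_card_G_orbits_iff
    (G X : Type*) [Group G] [Finite G] [Finite X] [MulAction G X] (H : Subgroup G) :
    Nat.card (MulAction.orbitRel.Quotient H X) =
        H.index * Nat.card (MulAction.orbitRel.Quotient G X) ↔
      ∀ x : X, (MulAction.stabilizer H x).map H.subtype = MulAction.stabilizer G x := by
  classical
  cases nonempty_fintype G
  cases nonempty_fintype X
  have hmap : ∀ x : X, (stabilizer H x).map H.subtype = H ⊓ stabilizer G x := by
    intro x
    ext g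
    simp only [Subgroup.mem_map, Subgroup.coe_subtype, Subgroup.mem_inf, mem_stabilizer_iff]
    constructor
    · rintro ⟨⟨h, hh⟩, hs, rfl⟩
      exact ⟨hh, hs⟩
    · rintro ⟨hg, hs⟩
      exact ⟨⟨g, hg⟩, hs, rfl⟩
  have hRHS : (∀ x : X, (stabilizer H x).map H.subtype = stabilizer G x)
      ↔ ∀ (g : G) (x : X), g • x = x → g ∈ H := by
    constructor
    · intro h g x hx
      have h2 : g ∈ H ⊓ stabilizer G x := by
        rw [← hmap, h x]; exact hx
      exact h2.1
    · intro h x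
      rw [hmap, inf_eq_right.mpr]
      intro g hg
      exact h g x hg
  rw [hRHS]
  -- now the numeric part via Burnside
  haveI : ∀ a : G, Fintype (fixedBy X a) := fun a => Fintype.ofFinite _
  haveI : ∀ a : H, Fintype (fixedBy X a) := fun a => Fintype.ofFinite _
  haveI : Fintype (orbitRel.Quotient G X) := Fintype.ofFinite _
  haveI : Fintype (orbitRel.Quotient H X) := Fintype.ofFinite _
  have bG := sum_card_fixedBy_eq_card_orbits_mul_card_group G X
  have bH := sum_card_fixedBy_eq_card_orbits_mul_card_group H X
  have hfix : ∀ h : H, Fintype.card (fixedBy X h) = Fintype.card (fixedBy X (h : G)) := by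
    intro h
    apply Fintype.card_congr
    exact Equiv.refl _
  have hsplit : (∑ g : G, Fintype.card (fixedBy X g)) =
      (∑ g ∈ Finset.univ.filter (· ∈ H), Fintype.card (fixedBy X g)) +
      (∑ g ∈ Finset.univ.filter (¬ · ∈ H), Fintype.card (fixedBy X g)) :=
    (Finset.sum_filter_add_sum_filter_not _ _ _).symm
  have hsub : (∑ g ∈ Finset.univ.filter (· ∈ H), Fintype.card (fixedBy X g)) =
      ∑ h : H, Fintype.card (fixedBy X (h : G)) := by
    apply Finset.sum_subtype
    intro g
    simp
  have hcardpos : 0 < Nat.card H := Nat.card_pos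
  have hindex : H.index * Nat.card H = Nat.card G := H.index_mul_card
  constructor
  · intro heq g x hgx
    by_contra hg
    have h1 : (∑ h : H, Fintype.card (fixedBy X (h : G))) =
        ∑ h : H, Fintype.card (fixedBy X h) :=
      Finset.sum_congr rfl fun h _ => (hfix h).symm
    have hsumH : (∑ g ∈ Finset.univ.filter (· ∈ H), Fintype.card (fixedBy X g)) =
        Fintype.card (orbitRel.Quotient H X) * Fintype.card H := by
      rw [hsub, h1, bH]
    have hG : Fintype.card (orbitRel.Quotient H X) * Fintype.card H =
        Fintype.card (orbitRel.Quotient G X) * Fintype.card G := by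
      have e1 : Fintype.card (orbitRel.Quotient H X) =
          H.index * Fintype.card (orbitRel.Quotient G X) := by
        simpa [Nat.card_eq_fintype_card] using heq
      have e2 : H.index * Fintype.card H = Fintype.card G := by
        simpa [Nat.card_eq_fintype_card] using hindex
      rw [e1, ← e2]; ring
    have hzero : (∑ g ∈ Finset.univ.filter (¬ · ∈ H), Fintype.card (fixedBy X g)) = 0 := by
      have h3 : (∑ g ∈ Finset.univ.filter (· ∈ H), Fintype.card (fixedBy X g)) =
          ∑ g : G, Fintype.card (fixedBy X g) := by
        rw [hsumH, hG, ← bG]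
      omega
    have hmem : g ∈ Finset.univ.filter (¬ · ∈ H) := by simp [hg]
    have h0 : Fintype.card (fixedBy X g) = 0 :=
      (Finset.sum_eq_zero_iff).mp hzero g hmem
    exact (Fintype.card_eq_zero_iff.mp h0).false ⟨x, hgx⟩
  · intro hstab
    have hzero : (∑ g ∈ Finset.univ.filter (¬ · ∈ H), Fintype.card (fixedBy X g)) = 0 := by
      apply Finset.sum_eq_zero
      intro g hg
      simp only [Finset.mem_filter] at hg
      rw [Fintype.card_eq_zero_iff]
      constructor
      rintro ⟨x, hx⟩
      exact hg.2 (hstab g x hx)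
    have hsum : (∑ h : H, Fintype.card (fixedBy X (h : G))) =
        ∑ g : G, Fintype.card (fixedBy X g) := by
      rw [hsplit, ← hsub, hzero, add_zero]
    have : Fintype.card (orbitRel.Quotient H X) * Fintype.card H =
        Fintype.card (orbitRel.Quotient G X) * Fintype.card G := by
      rw [← bG, ← bH, ← hsum]
      exact Finset.sum_congr rfl fun h _ => hfix h
    have hG : (Fintype.card G : ℕ) = H.index * Fintype.card H := by
      rw [← Nat.card_eq_fintype_card (α := G), ← hindex, Nat.card_eq_fintype_card]
    rw [hG] at this
    have : Fintype.card (orbitRel.Quotient H X) =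
        H.index * Fintype.card (orbitRel.Quotient G X) := by
      have hpos : 0 < Fintype.card H := Fintype.card_pos
      apply Nat.eq_of_mul_eq_mul_right hpos
      rw [this]; ring
    simpa [Nat.card_eq_fintype_card] using this
end

section
/- Let n ≥ 1 and r ≥ 1 be integers. Then the natural action of the general linear group GL_r(ℤ/nℤ) on (ℤ/nℤ)^r (by matrix-vector multiplication) has exactly d(n) distinct orbits, where d(n) is the number of positive divisors of n. -/
/-- The orbit of a vector `v ∈ (ℤ/nℤ)^r` under the natural action of `GL_r(ℤ/nℤ)`
by matrix-vector multiplication. -/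
def glOrbit (n r : ℕ) (v : Fin r → ZMod n) : Set (Fin r → ZMod n) :=
  {w | ∃ A : GL (Fin r) (ZMod n), (A : Matrix (Fin r) (Fin r) (ZMod n)).mulVec v = w}

section Emb
variable {n r : ℕ} [NeZero r]

lemma sum_two_aux (i : Fin r) (hi : i ≠ 0) (a b : ZMod n) (f : Fin r → ZMod n) :
    ∑ k, (if k = 0 then a else if k = i then b else 0) * f k = a * f 0 + b * f i := by
  have h : (fun k => (if k = 0 then a else if k = i then b else 0) * f k)
      = fun k => (if k = 0 then a * f 0 else 0) + (if k = i then b * f i else 0) := by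
    funext k
    by_cases h0 : k = 0
    · subst h0; simp [Ne.symm hi]
    · by_cases h1 : k = i
      · subst h1; simp [h0]
      · simp [h0, h1]
  rw [h, Finset.sum_add_distrib]
  simp

lemma sum_one_aux {j : Fin r} (f : Fin r → ZMod n) :
    ∑ k, (if k = j then (1 : ZMod n) else 0) * f k = f j := by
  have h : (fun k => (if k = j then (1 : ZMod n) else 0) * f k)
      = fun k => (if k = j then f j else 0) := by
    funext k; by_cases h0 : k = j <;> simp [h0]
  rw [h]; simp

/-- A 2×2 matrix embedded at coordinates `0` and `i` of an `r×r` identity. -/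
def emb (i : Fin r) (p q s t : ZMod n) : Matrix (Fin r) (Fin r) (ZMod n) :=
  fun j k =>
    if j = 0 then (if k = 0 then p else if k = i then q else 0)
    else if j = i then (if k = 0 then s else if k = i then t else 0)
    else if k = j then 1 else 0

variable {i : Fin r} {p q s t : ZMod n}

lemma emb_row_zero (k : Fin r) :
    emb i p q s t 0 k = if k = 0 then p else if k = i then q else 0 := by simp [emb]

lemma emb_row_i (hi : i ≠ 0) (k : Fin r) :
    emb i p q s t i k = if k = 0 then s else if k = i then t else 0 := by simp [emb, hi]

lemma emb_row_other {j : Fin r} (hj0 : j ≠ 0) (hji : j ≠ i) (k : Fin r) :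
    emb i p q s t j k = if k = j then 1 else 0 := by simp [emb, hj0, hji]

lemma emb_mulVec (hi : i ≠ 0) (v : Fin r → ZMod n) :
    (emb i p q s t).mulVec v =
      fun j => if j = 0 then p * v 0 + q * v i else if j = i then s * v 0 + t * v i else v j := by
  funext j
  show ∑ k, emb i p q s t j k * v k = _
  by_cases h0 : j = 0
  · subst h0
    simp only [emb_row_zero, sum_two_aux i hi]
    simp [Ne.symm hi]
  · by_cases h1 : j = i
    · subst h1
      simp only [emb_row_i hi, sum_two_aux j hi]
      simp [h0]
    · simp only [emb_row_other h0 h1, sum_one_aux, if_neg h0, if_neg h1]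

lemma emb_mul_emb (hi : i ≠ 0) (p' q' s' t' : ZMod n) :
    emb i p q s t * emb i p' q' s' t' =
      emb i (p * p' + q * s') (p * q' + q * t') (s * p' + t * s') (s * q' + t * t') := by
  ext j k
  rw [Matrix.mul_apply]
  by_cases h0 : j = 0
  · subst h0
    simp only [emb_row_zero, sum_two_aux i hi, emb_row_i hi]
    split_ifs <;> ring
  · by_cases h1 : j = i
    · subst h1
      simp only [emb_row_i hi, sum_two_aux j hi, emb_row_zero]
      split_ifs <;> ring
    · simp only [emb_row_other h0 h1, sum_one_aux]

lemma emb_one (hi : i ≠ 0) : emb i (1 : ZMod n) 0 0 1 = 1 := by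
  ext j k
  rw [Matrix.one_apply]
  by_cases h0 : j = 0
  · subst h0
    simp only [emb_row_zero]
    by_cases hk : k = 0
    · simp [hk]
    · by_cases hk' : k = i <;> simp [hk, hk', eq_comm]
  · by_cases h1 : j = i
    · subst h1
      simp only [emb_row_i hi]
      by_cases hk : k = 0
      · simp [hk, h0]
      · by_cases hk' : k = j
        · simp [hk', h0]
        · simp [hk, hk', (Ne.symm hk' : j ≠ k)]
    · simp [emb_row_other h0 h1, eq_comm]

end Emb
section Emb2
variable {n r : ℕ} [NeZero r] {i : Fin r} {p q s t : ZMod n}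

/-- The embedded matrix as an element of `GL` when the 2×2 determinant is 1. -/
def embGL (i : Fin r) (hi : i ≠ 0) (p q s t : ZMod n) (h : p * t - q * s = 1) :
    GL (Fin r) (ZMod n) where
  val := emb i p q s t
  inv := emb i t (-q) (-s) p
  val_inv := by
    rw [emb_mul_emb hi]
    have e1 : p * t + q * -s = 1 := by linear_combination h
    have e2 : p * -q + q * p = 0 := by ring
    have e3 : s * t + t * -s = 0 := by ring
    have e4 : s * -q + t * p = 1 := by linear_combination h
    rw [e1, e2, e3, e4, emb_one hi]
  inv_val := by
    rw [emb_mul_emb hi]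
    have e1 : t * p + -q * s = 1 := by linear_combination h
    have e2 : t * q + -q * t = 0 := by ring
    have e3 : -s * p + p * s = 0 := by ring
    have e4 : -s * q + p * t = 1 := by linear_combination h
    rw [e1, e2, e3, e4, emb_one hi]

lemma embGL_coe (hi : i ≠ 0) (h : p * t - q * s = 1) :
    ((embGL i hi p q s t h : GL (Fin r) (ZMod n)) : Matrix (Fin r) (Fin r) (ZMod n))
      = emb i p q s t := rfl

end Emb2

section Pair
variable {n r : ℕ} [NeZero n] [NeZero r]

lemma reduce_pair (v : Fin r → ZMod n) (i : Fin r) (hi : i ≠ 0) :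
    ∃ (A : GL (Fin r) (ZMod n)) (c : ZMod n),
      (A : Matrix (Fin r) (Fin r) (ZMod n)).mulVec v
          = (fun j => if j = 0 then c else if j = i then 0 else v j) ∧
      Ideal.span {c} = Ideal.span {v 0, v i} := by
  set a := v 0 with ha
  set b := v i with hb
  set A0 : ℤ := (a.val : ℤ) with hA0
  set B0 : ℤ := (b.val : ℤ) with hB0
  by_cases hg : Int.gcd A0 B0 = 0
  · -- both are zero
    obtain ⟨hA0z, hB0z⟩ := Int.gcd_eq_zero_iff.mp hg
    have hA : a = 0 := by
      have : a.val = 0 := by rw [hA0] at hA0z; exact_mod_cast hA0z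
      exact (ZMod.val_eq_zero a).mp this
    have hB : b = 0 := by
      have : b.val = 0 := by rw [hB0] at hB0z; exact_mod_cast hB0z
      exact (ZMod.val_eq_zero b).mp this
    refine ⟨1, 0, ?_, by rw [hA, hB]; simp⟩
    rw [Units.val_one, Matrix.one_mulVec]
    funext j
    by_cases h0 : j = 0
    · subst h0; simpa using hA
    · by_cases h1 : j = i
      · subst h1; simp [h0, ← hb, hB]
      · simp [h0, h1]
  · -- Bezout
    set g : ℤ := (Int.gcd A0 B0 : ℤ) with hgdef
    have hgne : g ≠ 0 := by
      rw [hgdef]; exact_mod_cast hg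
    have hdvdA : g ∣ A0 := Int.gcd_dvd_left A0 B0
    have hdvdB : g ∣ B0 := Int.gcd_dvd_right A0 B0
    set a1 : ℤ := A0 / g with ha1
    set b1 : ℤ := B0 / g with hb1
    have hA : A0 = g * a1 := (Int.mul_ediv_cancel' hdvdA).symm
    have hB : B0 = g * b1 := (Int.mul_ediv_cancel' hdvdB).symm
    set p0 : ℤ := Int.gcdA A0 B0 with hp0
    set q0 : ℤ := Int.gcdB A0 B0 with hq0
    have hbez : g = A0 * p0 + B0 * q0 := Int.gcd_eq_gcd_ab A0 B0
    have hdet0 : p0 * a1 - q0 * (-b1) = 1 := by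
      have h1 : g * (p0 * a1 - q0 * (-b1)) = g * 1 := by
        rw [hA, hB] at hbez
        linear_combination hbez.symm
      exact mul_left_cancel₀ hgne h1
    -- cast everything to ZMod n
    set p : ZMod n := ((p0 : ℤ) : ZMod n) with hp
    set q : ZMod n := ((q0 : ℤ) : ZMod n) with hq
    set s : ZMod n := ((-b1 : ℤ) : ZMod n) with hs
    set t : ZMod n := ((a1 : ℤ) : ZMod n) with ht
    have hdet : p * t - q * s = 1 := by
      have := congrArg (fun z : ℤ => ((z : ZMod n))) hdet0
      push_cast at this
      rw [hp, hq, hs, ht]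
      push_cast
      linear_combination this
    have hacast : ((A0 : ℤ) : ZMod n) = a := by
      rw [hA0]; push_cast; exact ZMod.natCast_rightInverse a
    have hbcast : ((B0 : ℤ) : ZMod n) = b := by
      rw [hB0]; push_cast; exact ZMod.natCast_rightInverse b
    set c : ZMod n := ((g : ℤ) : ZMod n) with hc
    have hpq : p * a + q * b = c := by
      rw [← hacast, ← hbcast, hc]
      have : (g : ℤ) = p0 * A0 + q0 * B0 := by linear_combination hbez
      rw [this]; push_cast; ring
    have hst : s * a + t * b = 0 := by
      rw [← hacast, ← hbcast]
      have : (-b1) * A0 + a1 * B0 = 0 := by rw [hA, hB]; ring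
      have h2 := congrArg (fun z : ℤ => ((z : ZMod n))) this
      push_cast at h2
      rw [hs, ht]
      push_cast
      linear_combination h2
    refine ⟨embGL i hi p q s t hdet, c, ?_, ?_⟩
    · rw [embGL_coe, emb_mulVec hi]
      funext j
      by_cases h0 : j = 0
      · subst h0; simp [← ha, ← hb, hpq]
      · by_cases h1 : j = i
        · subst h1; simp [h0, ← ha, ← hb, hst]
        · simp [h0, h1]
    · apply le_antisymm
      · rw [Ideal.span_le, Set.singleton_subset_iff]
        rw [← hpq]
        exact Ideal.add_mem _
          (Ideal.mul_mem_left _ _ (Ideal.subset_span (by simp)))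
          (Ideal.mul_mem_left _ _ (Ideal.subset_span (by simp)))
      · rw [Ideal.span_le, Set.insert_subset_iff, Set.singleton_subset_iff]
        constructor
        · rw [SetLike.mem_coe, Ideal.mem_span_singleton]
          refine ⟨((a1 : ℤ) : ZMod n), ?_⟩
          rw [← hacast, hA]; push_cast; ring
        · rw [SetLike.mem_coe, Ideal.mem_span_singleton]
          refine ⟨((b1 : ℤ) : ZMod n), ?_⟩
          rw [← hbcast, hB]; push_cast; ring

end Pair
section Reduce
variable {n r : ℕ} [NeZero n] [NeZero r]

lemma GL_mulVec_mulVec (A B : GL (Fin r) (ZMod n)) (v : Fin r → ZMod n) :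
    (B : Matrix (Fin r) (Fin r) (ZMod n)).mulVec
        ((A : Matrix (Fin r) (Fin r) (ZMod n)).mulVec v)
      = ((B * A : GL (Fin r) (ZMod n)) : Matrix (Fin r) (Fin r) (ZMod n)).mulVec v := by
  rw [Matrix.mulVec_mulVec, Units.val_mul]

lemma GL_mulVec_cancel (A : GL (Fin r) (ZMod n)) (v : Fin r → ZMod n) :
    ((A⁻¹ : GL (Fin r) (ZMod n)) : Matrix (Fin r) (Fin r) (ZMod n)).mulVec
        ((A : Matrix (Fin r) (Fin r) (ZMod n)).mulVec v) = v := by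
  rw [GL_mulVec_mulVec, inv_mul_cancel, Units.val_one, Matrix.one_mulVec]

lemma reduce_set (v : Fin r → ZMod n) (s : Finset (Fin r)) (hs : (0 : Fin r) ∉ s) :
    ∃ (A : GL (Fin r) (ZMod n)) (c : ZMod n),
      (A : Matrix (Fin r) (Fin r) (ZMod n)).mulVec v
          = (fun j => if j = 0 then c else if j ∈ s then 0 else v j) ∧
      Ideal.span {c} = Ideal.span (v '' (insert (0 : Fin r) (s : Set (Fin r)))) := by
  classical
  induction s using Finset.induction_on with
  | empty =>
      refine ⟨1, v 0, ?_, by simp⟩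
      rw [Units.val_one, Matrix.one_mulVec]
      funext j
      by_cases h0 : j = 0
      · subst h0; simp
      · simp [h0]
  | @insert i s hi_not ih =>
      have hi0 : i ≠ 0 := by rintro rfl; exact hs (Finset.mem_insert_self _ _)
      have hs0 : (0 : Fin r) ∉ s := fun h => hs (Finset.mem_insert_of_mem h)
      obtain ⟨A, c, hA, hspan⟩ := ih hs0
      set w : Fin r → ZMod n := fun j => if j = 0 then c else if j ∈ s then 0 else v j with hw
      obtain ⟨B, c', hB, hspan'⟩ := reduce_pair w i hi0
      refine ⟨B * A, c', ?_, ?_⟩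
      · rw [← GL_mulVec_mulVec, hA, hB]
        funext j
        by_cases h0 : j = 0
        · subst h0; simp
        · by_cases h1 : j = i
          · subst h1; simp [h0]
          · have hj : (j ∈ insert i s) = (j ∈ s) := by simp [h1]
            simp only [if_neg h0, if_neg h1, hw, hj]
      · have hw0 : w 0 = c := by simp [hw]
        have hwi : w i = v i := by simp [hw, hi0, hi_not]
        rw [hspan', hw0, hwi]
        have himg : v '' (insert (0 : Fin r) ((insert i s : Finset (Fin r)) : Set (Fin r)))
            = insert (v i) (v '' (insert (0 : Fin r) (s : Set (Fin r)))) := by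
          rw [Finset.coe_insert, Set.insert_comm, Set.image_insert_eq]
        rw [himg]
        rw [Ideal.span_insert (v i) (v '' insert (0 : Fin r) (s : Set (Fin r)))]
        rw [Ideal.span_insert c {v i}]
        rw [hspan]
        exact sup_comm _ _

lemma reduce_full (v : Fin r → ZMod n) :
    ∃ (A : GL (Fin r) (ZMod n)) (c : ZMod n),
      (A : Matrix (Fin r) (Fin r) (ZMod n)).mulVec v = Pi.single (0 : Fin r) c ∧
      Ideal.span {c} = Ideal.span (Set.range v) := by
  classical
  obtain ⟨A, c, hA, hspan⟩ := reduce_set v (Finset.univ.erase 0) (Finset.notMem_erase _ _)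
  refine ⟨A, c, ?_, ?_⟩
  · rw [hA]
    funext j
    by_cases h0 : j = 0
    · subst h0; simp
    · simp [h0, Pi.single_eq_of_ne h0]
  · rw [hspan]
    rw [← Set.image_univ]
    congr 1
    ext j
    simp [eq_comm]
end Reduce
section Orbit
variable {n r : ℕ} [NeZero n] [NeZero r]

lemma mem_glOrbit_self (v : Fin r → ZMod n) : v ∈ glOrbit n r v :=
  ⟨1, by rw [Units.val_one, Matrix.one_mulVec]⟩

lemma glOrbit_eq_of_mulVec {v w : Fin r → ZMod n} (A : GL (Fin r) (ZMod n))
    (h : (A : Matrix (Fin r) (Fin r) (ZMod n)).mulVec v = w) :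
    glOrbit n r v = glOrbit n r w := by
  ext u
  constructor
  · rintro ⟨B, rfl⟩
    exact ⟨B * A⁻¹, by rw [← GL_mulVec_mulVec, ← h, GL_mulVec_cancel]⟩
  · rintro ⟨B, rfl⟩
    exact ⟨B * A, by rw [← GL_mulVec_mulVec, h]⟩

lemma span_range_mulVec_le (M : Matrix (Fin r) (Fin r) (ZMod n)) (v : Fin r → ZMod n) :
    Ideal.span (Set.range (M.mulVec v)) ≤ Ideal.span (Set.range v) := by
  rw [Ideal.span_le]
  rintro _ ⟨j, rfl⟩
  show M.mulVec v j ∈ Ideal.span (Set.range v)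
  have : M.mulVec v j = ∑ k, M j k * v k := rfl
  rw [this]
  exact Ideal.sum_mem _ fun k _ =>
    Ideal.mul_mem_left _ _ (Ideal.subset_span ⟨k, rfl⟩)

lemma span_range_eq_of_mulVec {v w : Fin r → ZMod n} (A : GL (Fin r) (ZMod n))
    (h : (A : Matrix (Fin r) (Fin r) (ZMod n)).mulVec v = w) :
    Ideal.span (Set.range w) = Ideal.span (Set.range v) := by
  apply le_antisymm
  · rw [← h]; exact span_range_mulVec_le _ _
  · have h2 : ((A⁻¹ : GL (Fin r) (ZMod n)) : Matrix (Fin r) (Fin r) (ZMod n)).mulVec w = v := by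
      rw [← h, GL_mulVec_cancel]
    rw [← h2]; exact span_range_mulVec_le _ _

lemma span_range_single (x : ZMod n) :
    Ideal.span (Set.range (Pi.single (0 : Fin r) x)) = Ideal.span {x} := by
  apply le_antisymm
  · rw [Ideal.span_le]
    rintro _ ⟨j, rfl⟩
    by_cases h0 : j = 0
    · subst h0; rw [Pi.single_eq_same]; exact Ideal.subset_span rfl
    · rw [Pi.single_eq_of_ne h0]; exact (Ideal.span {x}).zero_mem
  · rw [Ideal.span_le, Set.singleton_subset_iff]
    exact Ideal.subset_span ⟨0, Pi.single_eq_same _ _⟩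

end Orbit

section Units
variable {n : ℕ} [NeZero n]

lemma exists_unit_mul_eq_gcd (a : ZMod n) :
    ∃ u : (ZMod n)ˣ, (u : ZMod n) * a = ((Nat.gcd a.val n : ℕ) : ZMod n) := by
  have hn : 0 < n := Nat.pos_of_ne_zero (NeZero.ne n)
  set g : ℕ := Nat.gcd a.val n with hg
  have hgpos : 0 < g := by
    rcases Nat.eq_zero_or_pos g with h | h
    · exact absurd ((Nat.gcd_eq_zero_iff.mp h).2) (by omega)
    · exact h
  set a' : ℕ := a.val / g with ha'
  set n' : ℕ := n / g with hn'
  have hcop : Nat.Coprime a' n' := Nat.coprime_div_gcd_div_gcd hgpos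
  have hn'dvd : n' ∣ n := Nat.div_dvd_of_dvd (Nat.gcd_dvd_right _ _)
  have hn'pos : 0 < n' := Nat.div_pos (Nat.le_of_dvd hn (Nat.gcd_dvd_right _ _)) hgpos
  haveI : NeZero n' := ⟨by omega⟩
  set u' : (ZMod n')ˣ := ZMod.unitOfCoprime a' hcop with hu'
  obtain ⟨u, hu⟩ := ZMod.unitsMap_surjective hn'dvd u'⁻¹
  refine ⟨u, ?_⟩
  have hcast : ZMod.castHom hn'dvd (ZMod n') ((a' : ZMod n) * u) = 1 := by
    have : ZMod.castHom hn'dvd (ZMod n') ((u : ZMod n)) = ((u'⁻¹ : (ZMod n')ˣ) : ZMod n') := by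
      have := congrArg (fun x : (ZMod n')ˣ => (x : ZMod n')) hu
      simpa [ZMod.unitsMap_def] using this
    rw [map_mul, this, map_natCast]
    have : ((a' : ZMod n')) = (u' : ZMod n') := (ZMod.coe_unitOfCoprime a' hcop).symm
    rw [this, Units.mul_inv]
  -- so (a' * u - 1) is killed by multiplication by g
  set y : ZMod n := (a' : ZMod n) * u with hy
  have hker : (n' : ZMod n) ∣ (y - 1) := by
    have h0 : ZMod.castHom hn'dvd (ZMod n') (y - 1) = 0 := by
      rw [map_sub, hcast, map_one, sub_self]
    have hyval : (((y - 1).val : ℕ) : ZMod n') = 0 := by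
      have heq : ZMod.castHom hn'dvd (ZMod n') (y - 1) = (((y - 1).val : ℕ) : ZMod n') := by
        rw [ZMod.castHom_apply, ← ZMod.natCast_val]
      rwa [heq] at h0
    obtain ⟨m, hm⟩ := (ZMod.natCast_eq_zero_iff _ _).mp hyval
    exact ⟨(m : ZMod n), by rw [← ZMod.natCast_rightInverse (y - 1), hm]; push_cast; ring⟩
  obtain ⟨k, hk⟩ := hker
  have hgy : (g : ZMod n) * (y - 1) = 0 := by
    rw [hk, ← mul_assoc]
    have : (g : ZMod n) * (n' : ZMod n) = ((g * n' : ℕ) : ZMod n) := by push_cast; ring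
    rw [this, Nat.mul_div_cancel' (Nat.gcd_dvd_right a.val n)]
    simp
  have ha : a = ((g * a' : ℕ) : ZMod n) := by
    rw [Nat.mul_div_cancel' (Nat.gcd_dvd_left a.val n)]
    exact (ZMod.natCast_rightInverse a).symm
  rw [ha]
  push_cast
  have : (g : ZMod n) * (a' : ZMod n) * (u : ZMod n) = (g : ZMod n) * y := by
    rw [hy]; ring
  calc (u : ZMod n) * ((g : ZMod n) * (a' : ZMod n)) = (g : ZMod n) * y := by rw [hy]; ring
    _ = (g : ZMod n) * 1 + (g : ZMod n) * (y - 1) := by ring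
    _ = (g : ZMod n) := by rw [hgy]; ring

lemma nat_dvd_of_cast_dvd {d₁ d₂ : ℕ} (h₁ : d₁ ∣ n)
    (h : ((d₁ : ℕ) : ZMod n) ∣ ((d₂ : ℕ) : ZMod n)) : d₁ ∣ d₂ := by
  obtain ⟨c, hc⟩ := h
  have hzero : ((((d₂ : ℤ) - (d₁ : ℤ) * (c.val : ℤ)) : ℤ) : ZMod n) = 0 := by
    push_cast
    rw [ZMod.natCast_rightInverse c, hc]
    ring
  have hdvd : (n : ℤ) ∣ ((d₂ : ℤ) - (d₁ : ℤ) * (c.val : ℤ)) :=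
    (ZMod.intCast_zmod_eq_zero_iff_dvd _ _).mp hzero
  have h2 : (d₁ : ℤ) ∣ (d₂ : ℤ) := by
    have hd1n : (d₁ : ℤ) ∣ (n : ℤ) := Int.natCast_dvd_natCast.mpr h₁
    have hrw : (d₂ : ℤ) = ((d₂ : ℤ) - (d₁ : ℤ) * (c.val : ℤ)) + (d₁ : ℤ) * (c.val : ℤ) := by ring
    rw [hrw]
    exact dvd_add (dvd_trans hd1n hdvd) (Dvd.intro _ rfl)
  exact_mod_cast h2
end Units
/-- For `n ≥ 1` and `r ≥ 1`, the natural action of `GL_r(ℤ/nℤ)` on `(ℤ/nℤ)^r` has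
exactly `d(n)` distinct orbits, where `d(n)` is the number of positive divisors of `n`. -/
theorem card_gl_orbits_eq_card_divisors (n r : ℕ) (hn : 1 ≤ n) (hr : 1 ≤ r) :
    Nat.card {S : Set (Fin r → ZMod n) // ∃ v : Fin r → ZMod n, S = glOrbit n r v} =
      n.divisors.card := by
  haveI : NeZero n := ⟨by omega⟩
  haveI : NeZero r := ⟨by omega⟩
  classical
  set f : {d : ℕ // d ∈ n.divisors} →
      {S : Set (Fin r → ZMod n) // ∃ v : Fin r → ZMod n, S = glOrbit n r v} :=
    fun d => ⟨glOrbit n r (Pi.single (0 : Fin r) (((d : ℕ) : ZMod n))),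
      ⟨Pi.single (0 : Fin r) (((d : ℕ) : ZMod n)), rfl⟩⟩ with hf
  have hbij : Function.Bijective f := by
    constructor
    · rintro ⟨d₁, hd₁⟩ ⟨d₂, hd₂⟩ h
      have horb : glOrbit n r (Pi.single (0 : Fin r) ((d₁ : ZMod n)))
          = glOrbit n r (Pi.single (0 : Fin r) ((d₂ : ZMod n))) := by
        have := congrArg Subtype.val h
        simpa [hf] using this
      have hmem : Pi.single (0 : Fin r) ((d₂ : ZMod n))
          ∈ glOrbit n r (Pi.single (0 : Fin r) ((d₁ : ZMod n))) := by
        rw [horb]; exact mem_glOrbit_self _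
      obtain ⟨A, hA⟩ := hmem
      have hspan := span_range_eq_of_mulVec A hA
      rw [span_range_single, span_range_single] at hspan
      have hdvd21 : ((d₁ : ℕ) : ZMod n) ∣ ((d₂ : ℕ) : ZMod n) :=
        Ideal.span_singleton_le_span_singleton.mp (le_of_eq hspan)
      have hdvd12 : ((d₂ : ℕ) : ZMod n) ∣ ((d₁ : ℕ) : ZMod n) :=
        Ideal.span_singleton_le_span_singleton.mp (le_of_eq hspan.symm)
      have h1n : d₁ ∣ n := (Nat.mem_divisors.mp hd₁).1
      have h2n : d₂ ∣ n := (Nat.mem_divisors.mp hd₂).1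
      exact Subtype.ext (Nat.dvd_antisymm
        (nat_dvd_of_cast_dvd h1n hdvd21) (nat_dvd_of_cast_dvd h2n hdvd12))
    · rintro ⟨S, v, rfl⟩
      obtain ⟨A, c, hA, hspan⟩ := reduce_full v
      obtain ⟨u, hu⟩ := exists_unit_mul_eq_gcd c
      set g : ℕ := Nat.gcd c.val n with hg
      have hgmem : g ∈ n.divisors := Nat.mem_divisors.mpr ⟨Nat.gcd_dvd_right _ _, by omega⟩
      refine ⟨⟨g, hgmem⟩, ?_⟩
      apply Subtype.ext
      show glOrbit n r (Pi.single (0 : Fin r) ((g : ZMod n))) = glOrbit n r v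
      have h1 : glOrbit n r v = glOrbit n r (Pi.single (0 : Fin r) c) :=
        glOrbit_eq_of_mulVec A hA
      set U : GL (Fin r) (ZMod n) :=
        ⟨(u : ZMod n) • (1 : Matrix (Fin r) (Fin r) (ZMod n)),
         ((u⁻¹ : (ZMod n)ˣ) : ZMod n) • (1 : Matrix (Fin r) (Fin r) (ZMod n)),
         by rw [Matrix.smul_mul, Matrix.mul_smul, smul_smul, one_mul]
            rw [Units.mul_inv, one_smul],
         by rw [Matrix.smul_mul, Matrix.mul_smul, smul_smul, one_mul]
            rw [Units.inv_mul, one_smul]⟩ with hU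
      have hUv : (U : Matrix (Fin r) (Fin r) (ZMod n)).mulVec (Pi.single (0 : Fin r) c)
          = Pi.single (0 : Fin r) ((g : ZMod n)) := by
        show ((u : ZMod n) • (1 : Matrix (Fin r) (Fin r) (ZMod n))).mulVec _ = _
        rw [Matrix.smul_mulVec, Matrix.one_mulVec]
        funext j
        rw [Pi.smul_apply]
        by_cases h0 : j = 0
        · subst h0; rw [Pi.single_eq_same, Pi.single_eq_same, smul_eq_mul, hu]
        · rw [Pi.single_eq_of_ne h0, Pi.single_eq_of_ne h0, smul_zero]
      have h2 : glOrbit n r (Pi.single (0 : Fin r) c)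
          = glOrbit n r (Pi.single (0 : Fin r) ((g : ZMod n))) :=
        glOrbit_eq_of_mulVec U hUv
      rw [h1, h2]
  rw [← Nat.card_eq_of_bijective f hbij]
  rw [Nat.card_eq_fintype_card]
  exact Fintype.card_coe _
end

section
/- For every integer n ≥ 1, the sum of gcd(a − 1, n) over all integers a with 0 ≤ a < n and gcd(a, n) = 1 equals d(n)·φ(n), where d(n) is the number of positive divisors of n and φ is Euler's totient function. That is, Σ_{0 ≤ a < n, gcd(a,n)=1} gcd(a − 1, n) = d(n)·φ(n). -/
open Finset

lemma count_ker_aux (n c : ℕ) [NeZero n] (hc : c ∣ n) :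
    (Finset.univ.filter (fun u : (ZMod n)ˣ => ZMod.unitsMap hc u = 1)).card * c.totient
      = n.totient := by
  haveI : NeZero c := ⟨fun h => by simp [h] at hc; exact (NeZero.ne n) hc⟩
  have hsurj := ZMod.unitsMap_surjective (m := n) (n := c) hc
  set f := ZMod.unitsMap hc with hf
  have h1 : Nat.card (ZMod n)ˣ = Nat.card ((ZMod n)ˣ ⧸ f.ker) * Nat.card f.ker :=
    Subgroup.card_eq_card_quotient_mul_card_subgroup f.ker
  have h2 : Nat.card ((ZMod n)ˣ ⧸ f.ker) = Nat.card (ZMod c)ˣ :=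
    Nat.card_congr (QuotientGroup.quotientKerEquivOfSurjective f hsurj).toEquiv
  have h3 : Nat.card f.ker = (Finset.univ.filter (fun u : (ZMod n)ˣ => f u = 1)).card := by
    rw [Nat.card_eq_fintype_card, ← Fintype.card_subtype]
    exact Fintype.card_congr (Equiv.subtypeEquivRight (fun u => f.mem_ker))
  rw [h2, h3] at h1
  simp only [Nat.card_eq_fintype_card, ZMod.card_units_eq_totient] at h1
  rw [mul_comm] at h1
  exact h1.symm

lemma unit_cond_aux (n c : ℕ) [NeZero n] (hc : c ∣ n) (a : ℕ) (h : Nat.Coprime a n) :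
    ZMod.unitsMap hc (ZMod.unitOfCoprime a h) = 1 ↔ (c : ℤ) ∣ (a : ℤ) - 1 := by
  haveI : NeZero c := ⟨fun hh => by simp [hh] at hc; exact (NeZero.ne n) hc⟩
  rw [ZMod.unitsMap_def, Units.ext_iff, Units.coe_map]
  simp only [ZMod.coe_unitOfCoprime, MonoidHom.coe_coe, ZMod.castHom_apply, Units.val_one]
  rw [ZMod.cast_natCast hc, show (1 : ZMod c) = ((1:ℕ) : ZMod c) by norm_num,
    ZMod.natCast_eq_natCast_iff, Nat.modEq_iff_dvd]
  push_cast
  exact dvd_sub_comm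

lemma card_eq_aux (n c : ℕ) [NeZero n] (hc : c ∣ n) :
    ((range n).filter (fun a => Nat.gcd a n = 1 ∧ (c : ℤ) ∣ (a : ℤ) - 1)).card
      = (Finset.univ.filter (fun u : (ZMod n)ˣ => ZMod.unitsMap hc u = 1)).card := by
  apply Finset.card_bij (fun a ha => ZMod.unitOfCoprime a (Finset.mem_filter.mp ha).2.1)
  · intro a ha
    rw [Finset.mem_filter]
    exact ⟨Finset.mem_univ _, (unit_cond_aux n c hc a _).mpr (Finset.mem_filter.mp ha).2.2⟩
  · intro a ha b hb hab
    have := congrArg (fun u : (ZMod n)ˣ => ((u : ZMod n)).val) hab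
    simpa [ZMod.val_cast_of_lt (Finset.mem_range.mp (Finset.mem_filter.mp ha).1),
      ZMod.val_cast_of_lt (Finset.mem_range.mp (Finset.mem_filter.mp hb).1)] using this
  · intro u hu
    have hcop : Nat.Coprime ((u : ZMod n)).val n := ZMod.val_coe_unit_coprime u
    have hlt : ((u : ZMod n)).val < n := ZMod.val_lt _
    have hval : ((((u : ZMod n)).val : ℕ) : ZMod n) = (u : ZMod n) := by
      rw [ZMod.natCast_val, ZMod.cast_id]
    have hunit : ZMod.unitOfCoprime ((u : ZMod n)).val hcop = u := by
      apply Units.ext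
      simpa using hval
    refine ⟨((u : ZMod n)).val, ?_, hunit⟩
    rw [Finset.mem_filter, Finset.mem_range]
    refine ⟨hlt, hcop, ?_⟩
    rw [← unit_cond_aux n c hc _ hcop, hunit]
    exact (Finset.mem_filter.mp hu).2

lemma gcd_expand_aux (n : ℕ) (hn : 0 < n) (x : ℤ) :
    (Int.gcd x n : ℕ) = ∑ c ∈ n.divisors.filter (fun c : ℕ => (c : ℤ) ∣ x), c.totient := by
  set g := Int.gcd x n with hg
  have hgn : g ∣ n := by
    have := Int.gcd_dvd_right (a := x) (b := (n:ℤ))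
    exact_mod_cast this
  have hg0 : g ≠ 0 := by
    intro h
    rw [hg] at h
    have := Int.gcd_eq_zero_iff.mp h
    simp at this
    omega
  have hdiv : g.divisors = n.divisors.filter (fun c : ℕ => (c : ℤ) ∣ x) := by
    ext c
    simp only [Nat.mem_divisors, Finset.mem_filter]
    constructor
    · intro ⟨hcg, _⟩
      refine ⟨⟨hcg.trans hgn, hn.ne'⟩, ?_⟩
      have : (c : ℤ) ∣ (g : ℤ) := Int.natCast_dvd_natCast.mpr hcg
      exact this.trans (Int.gcd_dvd_left _ _)
    · intro ⟨⟨hcn, _⟩, hcx⟩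
      refine ⟨?_, hg0⟩
      have : (c : ℤ) ∣ (g : ℤ) := Int.dvd_coe_gcd hcx (Int.natCast_dvd_natCast.mpr hcn)
      exact_mod_cast this
  conv_lhs => rw [← Nat.sum_totient g]
  rw [hdiv]

/-- For every `n ≥ 1`, `Σ_{0 ≤ a < n, gcd(a,n)=1} gcd(a - 1, n) = d(n)·φ(n)`, where
`d(n)` is the number of positive divisors of `n` and `φ` is Euler's totient function. -/
theorem sum_gcd_sub_one_eq_divisors_mul_totient (n : ℕ) (hn : 1 ≤ n) :
    ∑ a ∈ (Finset.range n).filter (fun a => Nat.gcd a n = 1),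
        Int.gcd ((a : ℤ) - 1) n = n.divisors.card * n.totient := by
  haveI : NeZero n := ⟨by omega⟩
  set S := (Finset.range n).filter (fun a => Nat.gcd a n = 1) with hS
  calc ∑ a ∈ S, Int.gcd ((a : ℤ) - 1) n
      = ∑ a ∈ S, ∑ c ∈ n.divisors, if (c : ℤ) ∣ (a : ℤ) - 1 then c.totient else 0 := by
        refine Finset.sum_congr rfl (fun a _ => ?_)
        rw [gcd_expand_aux n hn ((a : ℤ) - 1), Finset.sum_filter]
    _ = ∑ c ∈ n.divisors, ∑ a ∈ S, if (c : ℤ) ∣ (a : ℤ) - 1 then c.totient else 0 :=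
        Finset.sum_comm
    _ = ∑ c ∈ n.divisors, n.totient := by
        refine Finset.sum_congr rfl (fun c hc => ?_)
        have hcn : c ∣ n := (Nat.mem_divisors.mp hc).1
        rw [← Finset.sum_filter, Finset.sum_const, smul_eq_mul]
        have : S.filter (fun a : ℕ => (c : ℤ) ∣ (a : ℤ) - 1)
            = (range n).filter (fun a => Nat.gcd a n = 1 ∧ (c : ℤ) ∣ (a : ℤ) - 1) := by
          rw [hS, Finset.filter_filter]
        rw [this, card_eq_aux n c hcn, count_ker_aux n c hcn]
    _ = n.divisors.card * n.totient := by rw [Finset.sum_const, smul_eq_mul]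
end

section
/- Let n ≥ 1 and r ≥ 1 be integers. Then Σ_{A ∈ GL_r(ℤ/nℤ)} |{v ∈ (ℤ/nℤ)^r : A·v = v}| = d(n) · |GL_r(ℤ/nℤ)|, where the sum of the number of fixed vectors is taken over all invertible r×r matrices A over ℤ/nℤ. -/
set_option synthInstance.maxHeartbeats 1000000
set_option maxHeartbeats 1000000

open Matrix

section moves
variable {n r : ℕ} [NeZero n]

lemma exists_unit_mul_natCast_eq (n : ℕ) [NeZero n] (x : ZMod n) :
    ∃ (u : (ZMod n)ˣ) (d : ℕ), d ∣ n ∧ (u : ZMod n) * (d : ZMod n) = x := by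
  set a := x.val with ha
  set g := Nat.gcd a n with hg
  have hn0 : n ≠ 0 := NeZero.ne n
  have hgdvd : g ∣ n := Nat.gcd_dvd_right a n
  have hg0 : g ≠ 0 := fun h => hn0 (Nat.eq_zero_of_gcd_eq_zero_right h)
  have hq : n / g ∣ n := Nat.div_dvd_of_dvd hgdvd
  haveI : NeZero (n / g) := ⟨Nat.div_ne_zero_iff.2 ⟨hg0, Nat.le_of_dvd (Nat.pos_of_ne_zero hn0) hgdvd⟩⟩
  have hco : Nat.Coprime (a / g) (n / g) := Nat.coprime_div_gcd_div_gcd (Nat.pos_of_ne_zero hg0)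
  obtain ⟨u, hu⟩ := ZMod.unitsMap_surjective hq (ZMod.unitOfCoprime (a / g) hco)
  set b := (u : ZMod n).val with hb
  have hcast : ((b : ZMod (n / g))) = ((a / g : ℕ) : ZMod (n / g)) := by
    have := congrArg (Units.val) hu
    simp only [ZMod.unitsMap_def, Units.coe_map, MonoidHom.coe_coe, ZMod.coe_unitOfCoprime] at this
    rw [show ((u : ZMod n)) = ((b : ℕ) : ZMod n) by rw [hb, ZMod.natCast_val, ZMod.cast_id]] at this
    rw [map_natCast] at this
    exact this
  have hmod : b ≡ a / g [MOD n / g] := (ZMod.natCast_eq_natCast_iff _ _ _).1 hcast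
  have hmod2 : g * b ≡ g * (a / g) [MOD g * (n / g)] := hmod.mul_left' (c := g)
  rw [Nat.mul_div_cancel' hgdvd, Nat.mul_div_cancel' (Nat.gcd_dvd_left a n)] at hmod2
  refine ⟨u, g, hgdvd, ?_⟩
  have : ((g * b : ℕ) : ZMod n) = ((a : ℕ) : ZMod n) := (ZMod.natCast_eq_natCast_iff _ _ _).2 hmod2
  push_cast at this
  rw [mul_comm] at this
  rw [show ((b:ℕ) : ZMod n) = (u : ZMod n) by rw [hb, ZMod.natCast_val, ZMod.cast_id]] at this
  rw [this, ha, ZMod.natCast_val, ZMod.cast_id]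

omit [NeZero n] in
lemma move_trans (j k : Fin r) (hjk : j ≠ k) (q : ZMod n) (v : Fin r → ZMod n) :
    ∃ B : Matrix (Fin r) (Fin r) (ZMod n), IsUnit B.det ∧
      B.mulVec v = Function.update v j (v j - q * v k) := by
  refine ⟨Matrix.transvection j k (-q), by rw [Matrix.det_transvection_of_ne j k hjk]; exact isUnit_one, ?_⟩
  rw [Matrix.transvection, Matrix.add_mulVec, Matrix.one_mulVec, Matrix.single_mulVec]
  funext i
  rcases eq_or_ne i j with rfl | h
  · simp [sub_eq_add_neg]
  · simp [Function.update_of_ne h]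

omit [NeZero n] in
lemma move_swap (σ : Equiv.Perm (Fin r)) (v : Fin r → ZMod n) :
    ∃ B : Matrix (Fin r) (Fin r) (ZMod n), IsUnit B.det ∧ B.mulVec v = v ∘ σ := by
  refine ⟨σ.permMatrix (ZMod n), ?_, ?_⟩
  · rw [Matrix.det_permutation]
    exact (Units.isUnit (Equiv.Perm.sign σ)).map (Int.castRingHom (ZMod n))
  · funext i
    simp only [Equiv.Perm.permMatrix, PEquiv.toMatrix, Matrix.mulVec, dotProduct,
      Matrix.of_apply, Option.mem_def, Equiv.toPEquiv_apply, Option.some.injEq,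
      Function.comp_apply]
    simp [ite_mul]

lemma exists_reduce [NeZero r] (v : Fin r → ZMod n) :
    ∃ (B : Matrix (Fin r) (Fin r) (ZMod n)) (d : ℕ), IsUnit B.det ∧ d ∣ n ∧
      B.mulVec v = (Pi.single 0 ((d : ZMod n)) : Fin r → ZMod n) := by
  classical
  set μ : (Fin r → ZMod n) → ℕ :=
    fun w => n * (∑ i ∈ Finset.univ.erase (0 : Fin r), (w i).val) + (w 0).val with hμ
  suffices H : ∀ N, ∀ v : Fin r → ZMod n, μ v < N →
      ∃ (B : Matrix (Fin r) (Fin r) (ZMod n)) (d : ℕ), IsUnit B.det ∧ d ∣ n ∧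
        B.mulVec v = (Pi.single 0 ((d : ZMod n)) : Fin r → ZMod n) by
    exact H (μ v + 1) v (Nat.lt_succ_self _)
  intro N
  induction N with
  | zero => intro v h; exact absurd h (Nat.not_lt_zero _)
  | succ N ih =>
    intro v hv
    by_cases hz : ∀ i, i ≠ 0 → v i = 0
    · -- base case: only entry 0 possibly nonzero
      obtain ⟨u, d, hd, hud⟩ := exists_unit_mul_natCast_eq n (v 0)
      refine ⟨Matrix.diagonal (fun i => if i = 0 then ((u⁻¹ : (ZMod n)ˣ) : ZMod n) else 1),
        d, ?_, hd, ?_⟩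
      · rw [Matrix.det_diagonal, Finset.prod_ite_eq' Finset.univ (0 : Fin r)
          (fun _ => ((u⁻¹ : (ZMod n)ˣ) : ZMod n))]
        simp
      · funext i
        rw [Matrix.mulVec_diagonal]
        rcases eq_or_ne i 0 with rfl | hi
        · rw [if_pos rfl, Pi.single_eq_same, ← hud, ← mul_assoc, Units.inv_mul, one_mul]
        · simp [hi, hz i hi]
    · push_neg at hz
      obtain ⟨j, hj0, hvj⟩ := hz
      have key : ∀ a b : ℕ, ((a % b : ℕ) : ZMod n)
          = (a : ZMod n) - ((a / b : ℕ) : ZMod n) * (b : ZMod n) := by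
        intro a b
        rw [← Nat.cast_mul, ← Nat.cast_sub (Nat.div_mul_le_self a b)]
        congr 1
        have h1 := Nat.mod_add_div a b
        have h2 := Nat.mul_comm (a / b) b
        omega
      -- helper to combine a move with the induction hypothesis
      have combine : ∀ (B₁ : Matrix (Fin r) (Fin r) (ZMod n)) (w : Fin r → ZMod n),
          IsUnit B₁.det → B₁.mulVec v = w → μ w < μ v →
          ∃ (B : Matrix (Fin r) (Fin r) (ZMod n)) (d : ℕ), IsUnit B.det ∧ d ∣ n ∧
            B.mulVec v = (Pi.single 0 ((d : ZMod n)) : Fin r → ZMod n) := by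
        intro B₁ w hB₁ hw hlt
        obtain ⟨B₂, d, hB₂, hd, hB₂w⟩ := ih w (lt_of_lt_of_le hlt (Nat.lt_succ_iff.1 hv))
        refine ⟨B₂ * B₁, d, ?_, hd, by rw [← Matrix.mulVec_mulVec, hw, hB₂w]⟩
        rw [Matrix.det_mul]
        exact hB₂.mul hB₁
      have hvjval : 0 < (v j).val := by
        rcases Nat.eq_zero_or_pos (v j).val with h | h
        · exact absurd ((ZMod.val_eq_zero _).1 h) hvj
        · exact h
      have hjmem : j ∈ Finset.univ.erase (0 : Fin r) := Finset.mem_erase.2 ⟨hj0, Finset.mem_univ j⟩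
      have hn1 : 2 ≤ n := by
        rcases Nat.lt_or_ge n 2 with h | h
        · interval_cases n
          · exact absurd rfl (NeZero.ne 0)
          · exact absurd (Subsingleton.elim (v j) 0) hvj
        · exact h
      rcases eq_or_ne (v 0) 0 with h0 | h0
      · -- swap 0 and j
        obtain ⟨B₁, hB₁, hw⟩ := move_swap (n := n) (Equiv.swap (0 : Fin r) j) v
        apply combine B₁ _ hB₁ hw
        have htail : ∑ i ∈ Finset.univ.erase (0 : Fin r), ((v ∘ Equiv.swap 0 j) i).val
            = (∑ i ∈ (Finset.univ.erase (0 : Fin r)).erase j, (v i).val) + (v 0).val := by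
          rw [← Finset.sum_erase_add _ _ hjmem]
          congr 1
          · apply Finset.sum_congr rfl
            intro i hi
            have hi' := Finset.mem_erase.1 hi
            have hi'' := Finset.mem_erase.1 hi'.2
            simp [Equiv.swap_apply_of_ne_of_ne hi''.1 hi'.1]
          · simp [Equiv.swap_apply_right]
        have htailold : ∑ i ∈ Finset.univ.erase (0 : Fin r), (v i).val
            = (∑ i ∈ (Finset.univ.erase (0 : Fin r)).erase j, (v i).val) + (v j).val := by
          rw [← Finset.sum_erase_add _ _ hjmem]
        have hswap0 : ((v ∘ Equiv.swap 0 j) 0).val = (v j).val := by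
          simp [Equiv.swap_apply_left]
        have h0val : (v 0).val = 0 := (ZMod.val_eq_zero _).2 h0
        have hvjn : (v j).val < n := ZMod.val_lt _
        simp only [hμ, htail, hswap0, htailold, h0val]
        nlinarith [hvjval, hn1]
      · have hv0val : 0 < (v 0).val := by
          rcases Nat.eq_zero_or_pos (v 0).val with h | h
          · exact absurd ((ZMod.val_eq_zero _).1 h) h0
          · exact h
        rcases le_or_gt (v 0).val (v j).val with hle | hlt
        · -- subtract multiple of entry 0 from entry j
          obtain ⟨B₁, hB₁, hw⟩ := move_trans (n := n) j 0 hj0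
            (((v j).val / (v 0).val : ℕ) : ZMod n) v
          apply combine B₁ _ hB₁ hw
          set w := Function.update v j (v j - (((v j).val / (v 0).val : ℕ) : ZMod n) * v 0)
            with hwdef
          have hwj : (w j).val = (v j).val % (v 0).val := by
            have hle' : ((v j).val / (v 0).val) * (v 0).val ≤ (v j).val :=
              Nat.div_mul_le_self _ _
            have : w j = (((v j).val % (v 0).val : ℕ) : ZMod n) := by
              rw [hwdef, Function.update_self, key]
              simp [ZMod.natCast_val, ZMod.cast_id]
            rw [this]
            exact ZMod.val_cast_of_lt (lt_trans (Nat.mod_lt _ hv0val) (ZMod.val_lt (v 0)))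
          have hw0 : w 0 = v 0 := Function.update_of_ne (Ne.symm hj0) _ _
          have htail : ∑ i ∈ Finset.univ.erase (0 : Fin r), (w i).val
              = (∑ i ∈ (Finset.univ.erase (0 : Fin r)).erase j, (v i).val)
                + (v j).val % (v 0).val := by
            rw [← Finset.sum_erase_add _ (fun i => (w i).val) hjmem, hwj]
            congr 1
            refine Finset.sum_congr rfl fun i hi => ?_
            rw [hwdef, Function.update_of_ne (Finset.mem_erase.1 hi).1]
          have htailold : ∑ i ∈ Finset.univ.erase (0 : Fin r), (v i).val
              = (∑ i ∈ (Finset.univ.erase (0 : Fin r)).erase j, (v i).val) + (v j).val := by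
            rw [← Finset.sum_erase_add _ _ hjmem]
          have hmodlt : (v j).val % (v 0).val < (v j).val :=
            lt_of_lt_of_le (Nat.mod_lt _ hv0val) hle
          simp only [hμ, htail, hw0, htailold]
          have hn0 : 0 < n := Nat.pos_of_ne_zero (NeZero.ne n)
          nlinarith
        · -- subtract multiple of entry j from entry 0
          obtain ⟨B₁, hB₁, hw⟩ := move_trans (n := n) 0 j (Ne.symm hj0)
            (((v 0).val / (v j).val : ℕ) : ZMod n) v
          apply combine B₁ _ hB₁ hw
          set w := Function.update v 0 (v 0 - (((v 0).val / (v j).val : ℕ) : ZMod n) * v j)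
            with hwdef
          have hw0 : (w 0).val = (v 0).val % (v j).val := by
            have hle' : ((v 0).val / (v j).val) * (v j).val ≤ (v 0).val :=
              Nat.div_mul_le_self _ _
            have : w 0 = (((v 0).val % (v j).val : ℕ) : ZMod n) := by
              rw [hwdef, Function.update_self, key]
              simp [ZMod.natCast_val, ZMod.cast_id]
            rw [this]
            exact ZMod.val_cast_of_lt (lt_trans (Nat.mod_lt _ hvjval) (ZMod.val_lt (v j)))
          have htail : ∑ i ∈ Finset.univ.erase (0 : Fin r), (w i).val
              = ∑ i ∈ Finset.univ.erase (0 : Fin r), (v i).val := by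
            apply Finset.sum_congr rfl
            intro i hi
            rw [hwdef, Function.update_of_ne (Finset.mem_erase.1 hi).1]
          have hmodlt : (v 0).val % (v j).val < (v 0).val :=
            lt_of_lt_of_le (Nat.mod_lt _ hvjval) (le_of_lt hlt)
          simp only [hμ, htail, hw0]
          omega

end moves

section main

variable {n r : ℕ} [NeZero n]

/-- The action of `GL (Fin r) (ZMod n)` on column vectors. -/
instance glMulAction : MulAction (GL (Fin r) (ZMod n)) (Fin r → ZMod n) where
  smul A v := (A : Matrix (Fin r) (Fin r) (ZMod n)).mulVec v
  one_smul v := by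
    show ((1 : GL (Fin r) (ZMod n)) : Matrix (Fin r) (Fin r) (ZMod n)).mulVec v = v
    rw [Units.val_one, Matrix.one_mulVec]
  mul_smul A B v := by
    show ((A * B : GL (Fin r) (ZMod n)) : Matrix (Fin r) (Fin r) (ZMod n)).mulVec v
      = (A : Matrix (Fin r) (Fin r) (ZMod n)).mulVec
          ((B : Matrix (Fin r) (Fin r) (ZMod n)).mulVec v)
    rw [Units.val_mul, Matrix.mulVec_mulVec]

omit [NeZero n] in
lemma gl_smul_def (A : GL (Fin r) (ZMod n)) (v : Fin r → ZMod n) :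
    A • v = (A : Matrix (Fin r) (Fin r) (ZMod n)).mulVec v := rfl

omit [NeZero n] in
lemma gl_smul_addOrderOf (A : GL (Fin r) (ZMod n)) (v : Fin r → ZMod n) :
    addOrderOf (A • v) = addOrderOf v := by
  have hinj : Function.Injective
      (⇑(Matrix.mulVecLin (A : Matrix (Fin r) (Fin r) (ZMod n))).toAddMonoidHom) := by
    intro x y h
    simp only [LinearMap.toAddMonoidHom_coe, Matrix.mulVecLin_apply] at h
    have := congrArg (fun z => ((A⁻¹ : GL (Fin r) (ZMod n)) :
      Matrix (Fin r) (Fin r) (ZMod n)).mulVec z) h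
    simpa [Matrix.mulVec_mulVec, Units.inv_mul, Matrix.one_mulVec] using this
  have := addOrderOf_injective
    (Matrix.mulVecLin ((A : Matrix (Fin r) (Fin r) (ZMod n)))).toAddMonoidHom hinj v
  simpa [gl_smul_def] using this

lemma addOrderOf_pi_single [NeZero r] (x : ZMod n) :
    addOrderOf (Pi.single (0 : Fin r) x : Fin r → ZMod n) = addOrderOf x := by
  have hinj : Function.Injective (⇑(AddMonoidHom.single (fun _ : Fin r => ZMod n) 0)) := by
    intro a b hab
    exact Pi.single_injective (M := fun _ : Fin r => ZMod n) 0 hab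
  have := addOrderOf_injective (AddMonoidHom.single (fun _ : Fin r => ZMod n) 0) hinj x
  simpa [AddMonoidHom.single_apply] using this

lemma card_orbits [NeZero r] :
    Nat.card (Quotient (MulAction.orbitRel (GL (Fin r) (ZMod n)) (Fin r → ZMod n)))
      = n.divisors.card := by
  classical
  have hn0 : n ≠ 0 := NeZero.ne n
  set G := GL (Fin r) (ZMod n)
  set Q := Quotient (MulAction.orbitRel G (Fin r → ZMod n))
  have hbij : Function.Bijective
      (fun d : {d // d ∈ n.divisors} =>
        (⟦(Pi.single (0 : Fin r) (((d : ℕ) : ZMod n)) : Fin r → ZMod n)⟧ : Q)) := by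
    constructor
    · rintro ⟨d, hd⟩ ⟨e, he⟩ h
      have hd' : d ∣ n := (Nat.mem_divisors.1 hd).1
      have he' : e ∣ n := (Nat.mem_divisors.1 he).1
      have hrel := Quotient.exact h
      obtain ⟨A, hA⟩ := MulAction.mem_orbit_iff.1 hrel
      have hord : addOrderOf (Pi.single (0 : Fin r) ((d : ZMod n)) : Fin r → ZMod n)
          = addOrderOf (Pi.single (0 : Fin r) ((e : ZMod n)) : Fin r → ZMod n) := by
        rw [← hA, gl_smul_addOrderOf]
      rw [addOrderOf_pi_single, addOrderOf_pi_single,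
        ZMod.addOrderOf_coe d hn0, ZMod.addOrderOf_coe e hn0,
        Nat.gcd_eq_right hd', Nat.gcd_eq_right he'] at hord
      have : d = e := by
        rw [← Nat.div_div_self hd' hn0, ← Nat.div_div_self he' hn0, hord]
      exact Subtype.ext this
    · intro q
      induction q using Quotient.inductionOn with
      | h v =>
        obtain ⟨B, d, hB, hd, hBv⟩ := exists_reduce v
        obtain ⟨u, hu⟩ := (Matrix.isUnit_iff_isUnit_det B).2 hB
        refine ⟨⟨d, Nat.mem_divisors.2 ⟨hd, hn0⟩⟩, ?_⟩
        refine Quotient.sound (MulAction.mem_orbit_iff.2 ⟨u, ?_⟩)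
        rw [gl_smul_def, hu, hBv]
  calc Nat.card Q = Nat.card {d // d ∈ n.divisors} :=
        (Nat.card_eq_of_bijective _ hbij).symm
    _ = n.divisors.card := Nat.card_eq_finsetCard _

end main

/-- For `n ≥ 1` and `r ≥ 1`, the sum over all `A ∈ GL_r(ℤ/nℤ)` of the number of vectors
`v ∈ (ℤ/nℤ)^r` fixed by `A` (i.e. `A·v = v`) equals `d(n) · |GL_r(ℤ/nℤ)|`, where `d(n)`
is the number of positive divisors of `n`. -/
theorem sum_card_fixed_vectors_eq_divisors_mul_card_GL
    (n r : ℕ) [NeZero n] (hr : 1 ≤ r) :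
    ∑ A : GL (Fin r) (ZMod n),
        Nat.card {v : Fin r → ZMod n |
          (A : Matrix (Fin r) (Fin r) (ZMod n)).mulVec v = v} =
      n.divisors.card * Nat.card (GL (Fin r) (ZMod n)) := by
  classical
  haveI : NeZero r := ⟨by omega⟩
  letI : ∀ A : GL (Fin r) (ZMod n),
      Fintype (MulAction.fixedBy (Fin r → ZMod n) A) := fun A => Fintype.ofFinite _
  letI : Fintype (Quotient (MulAction.orbitRel (GL (Fin r) (ZMod n)) (Fin r → ZMod n))) :=
    Fintype.ofFinite _
  have burnside := MulAction.sum_card_fixedBy_eq_card_orbits_mul_card_group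
    (GL (Fin r) (ZMod n)) (Fin r → ZMod n)
  have hfix : ∀ A : GL (Fin r) (ZMod n),
      Nat.card {v : Fin r → ZMod n |
        (A : Matrix (Fin r) (Fin r) (ZMod n)).mulVec v = v}
      = Fintype.card (MulAction.fixedBy (Fin r → ZMod n) A) := by
    intro A
    have hset : {v : Fin r → ZMod n |
        (A : Matrix (Fin r) (Fin r) (ZMod n)).mulVec v = v}
        = MulAction.fixedBy (Fin r → ZMod n) A := by
      ext v
      exact Iff.rfl
    rw [hset, Nat.card_eq_fintype_card]
  calc ∑ A : GL (Fin r) (ZMod n),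
        Nat.card {v : Fin r → ZMod n |
          (A : Matrix (Fin r) (Fin r) (ZMod n)).mulVec v = v}
      = ∑ A : GL (Fin r) (ZMod n),
          Fintype.card (MulAction.fixedBy (Fin r → ZMod n) A) :=
        Finset.sum_congr rfl fun A _ => hfix A
    _ = Fintype.card (Quotient (MulAction.orbitRel (GL (Fin r) (ZMod n)) (Fin r → ZMod n)))
          * Fintype.card (GL (Fin r) (ZMod n)) := burnside
    _ = n.divisors.card * Nat.card (GL (Fin r) (ZMod n)) := by
        rw [← Nat.card_eq_fintype_card (α := Quotient _), card_orbits,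
          Nat.card_eq_fintype_card]
end
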